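/- Let λ > 0, μ > 0, ε ∈ [0,1), and set z₁ = (√(λ² + 4μ(1−ε)) − λ)/(μ(1−ε)). The crowding vector field G(z,m) = ((μ/2)·z·|z| + (μ·ε·m/2)·z² + λ·z + 2·m, −(1+ε)·μ·m·|z| − μ·(1 + ε·m²)·z) is Fréchet differentiable at the fixed point Q = (z₁, −1), its derivative is represented by the matrix [[μ(1−ε)·z₁ + λ, (μ·ε/2)·z₁² + 2], [0, (ε−1)·μ·z₁]], and the determinant of this matrix, (μ(1−ε)·z₁ + λ)·(ε−1)·μ·z₁, is strictly negative; hence the matrix has one strictly positive and one strictly negative real eigenvalue and Q is a saddle point. -/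

import Mathlib

lemma eig_upper0 (a b d : ℝ) :
    Module.End.HasEigenvalue (Matrix.toLin' !![a, b; 0, d]) a := by
  apply Module.End.hasEigenvalue_of_hasEigenvector (x := ![1, 0])
  constructor
  · rw [Module.End.mem_eigenspace_iff, Matrix.toLin'_apply]
    funext i
    fin_cases i <;>
      simp [Matrix.mulVec, dotProduct, Fin.sum_univ_two]
  · intro h
    have := congrFun h 0
    simp at this

lemma eig_upper1 (a b d : ℝ) (hne : d - a ≠ 0) :
    Module.End.HasEigenvalue (Matrix.toLin' !![a, b; 0, d]) d := by
  apply Module.End.hasEigenvalue_of_hasEigenvector (x := ![b / (d - a), 1])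
  constructor
  · rw [Module.End.mem_eigenspace_iff, Matrix.toLin'_apply]
    funext i
    fin_cases i <;>
      simp [Matrix.mulVec, dotProduct, Fin.sum_univ_two]
    field_simp
    ring
  · intro h
    have := congrFun h 1
    simp at this

/-- The crowding vector field is Fréchet differentiable at the fixed point
`Q = (z₁, −1)` with `z₁ = (√(λ² + 4μ(1−ε)) − λ)/(μ(1−ε))`, with derivative represented
by the matrix `[[μ(1−ε)z₁ + λ, (με/2)z₁² + 2], [0, (ε−1)μz₁]]`, whose determinant
`(μ(1−ε)z₁ + λ)·(ε−1)·μ·z₁` is strictly negative; hence it has one strictly positive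
and one strictly negative real eigenvalue and `Q` is a saddle point. -/
theorem crowding_saddle_Q (lam mu eps : ℝ) (hlam : 0 < lam) (hmu : 0 < mu)
    (heps : eps ∈ Set.Ico (0 : ℝ) 1) :
    let z₁ : ℝ := (Real.sqrt (lam ^ 2 + 4 * mu * (1 - eps)) - lam) / (mu * (1 - eps))
    let G : ℝ × ℝ → ℝ × ℝ := fun p =>
      ((mu / 2) * p.1 * |p.1| + (mu * eps * p.2 / 2) * p.1 ^ 2 + lam * p.1 + 2 * p.2,
        -((1 + eps) * mu * p.2 * |p.1|) - mu * (1 + eps * p.2 ^ 2) * p.1)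
    let A : Matrix (Fin 2) (Fin 2) ℝ :=
      !![mu * (1 - eps) * z₁ + lam, (mu * eps / 2) * z₁ ^ 2 + 2; 0, (eps - 1) * mu * z₁]
    ∃ L : ℝ × ℝ →L[ℝ] ℝ × ℝ,
      HasFDerivAt G L (z₁, -1) ∧
      (∀ v : ℝ × ℝ, L v = (A 0 0 * v.1 + A 0 1 * v.2, A 1 0 * v.1 + A 1 1 * v.2)) ∧
      A.det = (mu * (1 - eps) * z₁ + lam) * ((eps - 1) * mu * z₁) ∧
      A.det < 0 ∧
      Module.End.HasEigenvalue (Matrix.toLin' A) (mu * (1 - eps) * z₁ + lam) ∧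
      0 < mu * (1 - eps) * z₁ + lam ∧
      Module.End.HasEigenvalue (Matrix.toLin' A) ((eps - 1) * mu * z₁) ∧
      (eps - 1) * mu * z₁ < 0 := by
  intro z₁ G A
  have heps1 : (0:ℝ) < 1 - eps := by linarith [heps.2]
  have hden : (0:ℝ) < mu * (1 - eps) := by positivity
  have hz₁ : 0 < z₁ := by
    have h1 : lam < Real.sqrt (lam ^ 2 + 4 * mu * (1 - eps)) := by
      have : Real.sqrt (lam ^ 2) < Real.sqrt (lam ^ 2 + 4 * mu * (1 - eps)) := by
        apply Real.sqrt_lt_sqrt (by positivity)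
        nlinarith
      rwa [Real.sqrt_sq hlam.le] at this
    exact div_pos (by linarith) hden
  -- smooth version of G near the point
  set pt : ℝ × ℝ := (z₁, -1) with hpt
  have h1 : HasFDerivAt (fun p : ℝ × ℝ => p.1) (ContinuousLinearMap.fst ℝ ℝ ℝ) pt :=
    hasFDerivAt_fst
  have h2 : HasFDerivAt (fun p : ℝ × ℝ => p.2) (ContinuousLinearMap.snd ℝ ℝ ℝ) pt :=
    hasFDerivAt_snd
  have hF1 := (((h1.const_mul (mu / 2)).mul h1).add
      ((h2.const_mul (mu * eps / 2)).mul (h1.mul h1))).add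
      (h1.const_mul lam) |>.add (h2.const_mul 2)
  have hF2 := (((h2.const_mul ((1 + eps) * mu)).mul h1).neg).sub
      ((((h2.mul h2).const_mul eps).const_add 1 |>.const_mul mu).mul h1)
  have hFp := hF1.prodMk hF2
  have hGd := hFp.congr_of_eventuallyEq (f₁ := G) (by
    have hopen : {p : ℝ × ℝ | 0 < p.1} ∈ nhds pt := by
      apply IsOpen.mem_nhds
      · exact isOpen_lt continuous_const continuous_fst
      · exact hz₁
    filter_upwards [hopen] with p hp
    have habs : |p.1| = p.1 := abs_of_pos hp
    simp only [G, habs, Prod.mk.injEq, Pi.mul_apply, Pi.add_apply, Pi.sub_apply, Pi.neg_apply]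
    constructor <;> ring)
  refine ⟨_, hGd, ?_, ?_, ?_, ?_, ?_, ?_, ?_⟩
  · intro v
    simp only [ContinuousLinearMap.prod_apply, ContinuousLinearMap.add_apply,
      ContinuousLinearMap.sub_apply, ContinuousLinearMap.neg_apply,
      ContinuousLinearMap.smul_apply, ContinuousLinearMap.coe_fst',
      ContinuousLinearMap.coe_snd', smul_eq_mul, hpt, Pi.mul_apply]
    have hA00 : A 0 0 = mu * (1 - eps) * z₁ + lam := by simp [A]
    have hA01 : A 0 1 = (mu * eps / 2) * z₁ ^ 2 + 2 := by simp [A]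
    have hA10 : A 1 0 = 0 := by simp [A]
    have hA11 : A 1 1 = (eps - 1) * mu * z₁ := by simp [A]
    rw [hA00, hA01, hA10, hA11]
    simp only [Prod.mk.injEq]
    constructor <;> ring
  · simp [A, Matrix.det_fin_two]
  · have : A.det = (mu * (1 - eps) * z₁ + lam) * ((eps - 1) * mu * z₁) := by
      simp [A, Matrix.det_fin_two]
    rw [this]
    apply mul_neg_of_pos_of_neg
    · nlinarith
    · nlinarith
  · exact eig_upper0 _ _ _
  · nlinarith
  · apply eig_upper1
    nlinarith
  · nlinarith
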